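/- Fix a real β > 0 and let (d_l, d_r, d_g) = (2, 3, 3). For every x with 0 < x < 1 such that 0 ≤ ε(x) ≤ 1, the potential function satisfies U(x, x₂(x); ε(x)) > ε_Sha − ε(x), where x₂(x) = x·(1 − (1−x)²), ε(x) = 1 + ln( x / (1 − (1−x)²) ) / ( β·(1 − x₂(x))² ), and ε_Sha = 1 − 1/β. Consequently the potential threshold of the (2,3,3) precoded-rateless code equals its Shannon limit. -/
import Mathlib


/-- Potential function of the `(d_l = 2, d_r = 3, d_g = 3)` precoded-rateless code
with parameter `β > 0` over BEC(`ε`). -/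
noncomputable def potential233 (β ε x₁ x₂ : ℝ) : ℝ :=
  3*2/(β*3) + 1 - ε
    - (3*2/(β*3)) * (1 - x₁)^3
    - (1 - ε) * (1 - x₂)^3
    - (3/β) * (1 - (1 - x₁)^2)^2 * Real.exp (-β*(1-ε)*(1-x₂)^2)
    - (3*2/β) * x₁ * (1 - x₁)^2
    - 3 * (1 - ε) * x₂ * (1 - x₂)^2

/-- Second coordinate of the nontrivial DE fixed-point curve. -/
noncomputable def x₂curve233 (x : ℝ) : ℝ := x * (1 - (1 - x)^2)

/-- Erasure-probability coordinate of the nontrivial DE fixed-point curve. -/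
noncomputable def εcurve233 (β x : ℝ) : ℝ :=
  1 + Real.log (x / (1 - (1 - x)^2)) / (β * (1 - x₂curve233 x)^2)

/-- Padé-type bound: `log v ≤ (v - 1/v)/2` for `v ≥ 1`. -/
lemma log_le_pade {v : ℝ} (hv : 1 ≤ v) : Real.log v ≤ (v - v⁻¹)/2 := by
  have hv0 : (0:ℝ) < v := by linarith
  rw [Real.log_le_iff_le_exp hv0]
  have ht0 : 0 ≤ (v - v⁻¹)/2 := by
    have : v⁻¹ ≤ 1 := inv_le_one_of_one_le₀ hv
    linarith
  calc v ≤ 1 + (v - v⁻¹)/2 + ((v - v⁻¹)/2)^2/2 := by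
        have hiv : v * v⁻¹ = 1 := mul_inv_cancel₀ hv0.ne'
        nlinarith [sq_nonneg ((v-1)^2), sq_nonneg (v-1), sq_nonneg v⁻¹, sq_nonneg (v⁻¹ - 1)]
    _ ≤ Real.exp ((v - v⁻¹)/2) := Real.quadratic_le_exp_of_nonneg ht0

theorem stmt_17 (β : ℝ) (hβ : 0 < β) (x : ℝ) (hx0 : 0 < x) (hx1 : x < 1)
    (hε0 : 0 ≤ εcurve233 β x) (hε1 : εcurve233 β x ≤ 1) :
    potential233 β (εcurve233 β x) x (x₂curve233 x)
      > (1 - 1/β) - εcurve233 β x := by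
  have hv0 : (0:ℝ) < 2 - x := by linarith
  have hv1 : (1:ℝ) ≤ 2 - x := by linarith
  have hx2 : x₂curve233 x = x^2*(2-x) := by unfold x₂curve233; ring
  have hs0 : 0 < 1 - x₂curve233 x := by
    rw [hx2]
    nlinarith [mul_pos (sub_pos.mpr hx1) (show (0:ℝ) < 1 + x - x^2 by nlinarith)]
  set L := Real.log (2-x) with hL
  have hεeq : εcurve233 β x = 1 - L / (β * (1 - x₂curve233 x)^2) := by
    unfold εcurve233
    have hd : 1 - (1-x)^2 ≠ 0 := by nlinarith [mul_pos hx0 hv0]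
    have h1 : x / (1 - (1-x)^2) = (2-x)⁻¹ := by
      field_simp
      nlinarith [mul_pos hx0 hv0]
    rw [h1, Real.log_inv]
    ring
  have hβne : β ≠ 0 := hβ.ne'
  have hsne : 1 - x₂curve233 x ≠ 0 := hs0.ne'
  have hexp : Real.exp (-β*(1 - εcurve233 β x)*(1 - x₂curve233 x)^2) = (2-x)⁻¹ := by
    have h3 : -β*(1 - εcurve233 β x)*(1 - x₂curve233 x)^2 = -L := by
      rw [hεeq]
      field_simp
      ring
    rw [h3, hL, Real.exp_neg, Real.exp_log hv0]
  have hkey : potential233 β (εcurve233 β x) x (x₂curve233 x) - ((1 - 1/β) - εcurve233 β x)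
      = ((1 - x^3) - L * (1 + 2*x^2*(2-x))) / β := by
    unfold potential233
    rw [hexp, hεeq, hx2]
    have hsne' : 1 - x^2*(2-x) ≠ 0 := by rw [hx2] at hsne; exact hsne
    field_simp
    ring
  have hM : (0:ℝ) < 1 + 2*x^2*(2-x) := by nlinarith [sq_nonneg x]
  have hlog : L ≤ ((2-x) - (2-x)⁻¹)/2 := log_le_pade hv1
  have hpoly : ((2-x) - (2-x)⁻¹)/2 * (1 + 2*x^2*(2-x)) < 1 - x^3 := by
    have hiv : (2-x) * (2-x)⁻¹ = 1 := mul_inv_cancel₀ hv0.ne'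
    have hq : 2*(2-x)*(1-x^3) - ((2-x)^2-1)*(1+2*x^2*(2-x))
        = (1-x)^2*(1+2*x*(1-x)*(2-x)) := by ring
    have hqpos : 0 < (1-x)^2*(1+2*x*(1-x)*(2-x)) := by
      have h1x : (0:ℝ) < 1 - x := by linarith
      have : 0 < 1+2*x*(1-x)*(2-x) := by positivity
      positivity
    rw [div_mul_eq_mul_div, div_lt_iff₀ (by norm_num : (0:ℝ) < 2)]
    nlinarith [mul_pos hv0 hv0]
  have hpos : 0 < ((1 - x^3) - L * (1 + 2*x^2*(2-x))) / β := by
    apply div_pos _ hβ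
    have := mul_le_mul_of_nonneg_right hlog hM.le
    linarith
  linarith [hkey ▸ hpos]
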